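/- Let H ∈ (0, 1/2) and let c : ℝ → ℝ be measurable with ‖c‖_{L¹(ℝ)} < ∞. Then there exists a constant C > 0, depending only on H and ‖c‖_{L¹(ℝ)}, such that for all T ≥ 1: (1/T²)·∫₁^{T} ∫₀^{t₁−1} ( ∫₀^{t₂} ∫₀^{t₂} (t₁−s₁)^{−H−1/2}(t₂−s₂)^{−H−1/2} |c(s₁−s₂)| ds₁ ds₂ )² dt₂ dt₁ ≤ C·T^{−2H}. -/

import Mathlib

open Real MeasureTheory

/-- Monotonicity of interval integrals without integrability of the smaller function. -/
lemma my_interval_mono {f g : ℝ → ℝ} {a b : ℝ} (hab : a ≤ b)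
    (hf : ∀ x ∈ Set.Ioc a b, 0 ≤ f x) (hfg : ∀ x ∈ Set.Ioc a b, f x ≤ g x)
    (hg : IntervalIntegrable g volume a b) :
    ∫ x in a..b, f x ≤ ∫ x in a..b, g x := by
  rw [intervalIntegral.integral_of_le hab, intervalIntegral.integral_of_le hab]
  exact integral_mono_of_nonneg
    (ae_restrict_of_forall_mem measurableSet_Ioc hf)
    hg.1
    (ae_restrict_of_forall_mem measurableSet_Ioc hfg)

/-- Bound for the term `I_{2,1}(T)`: for `H ∈ (0,1/2)` and `c ∈ L¹(ℝ)`, there is `C > 0`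
such that for all `T ≥ 1`,
`(1/T²) ∫₁^T ∫₀^{t₁-1} (∫₀^{t₂}∫₀^{t₂} (t₁-s₁)^{-H-1/2}(t₂-s₂)^{-H-1/2}|c(s₁-s₂)| ds₁ ds₂)² dt₂ dt₁
  ≤ C T^{-2H}`. -/
theorem stmt_6 (H : ℝ) (hH : H ∈ Set.Ioo (0 : ℝ) (1/2)) (c : ℝ → ℝ) (hc : Measurable c)
    (hL1 : Integrable c) :
    ∃ C > 0, ∀ T ≥ (1 : ℝ),
      (1 / T ^ 2) * ∫ t₁ in (1 : ℝ)..T, ∫ t₂ in (0 : ℝ)..(t₁ - 1),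
          (∫ s₂ in (0 : ℝ)..t₂, ∫ s₁ in (0 : ℝ)..t₂,
            (t₁ - s₁) ^ (-H - 1/2) * (t₂ - s₂) ^ (-H - 1/2) * |c (s₁ - s₂)|) ^ 2 ≤
        C * T ^ (-2 * H) := by
  obtain ⟨hH0, hH2⟩ := hH
  have hcabs : Integrable (fun x => |c x|) := hL1.abs
  set K : ℝ := ∫ x, |c x| with hKdef
  have hK0 : 0 ≤ K := integral_nonneg fun x => abs_nonneg _
  have hhalf : (0 : ℝ) < 1/2 - H := by linarith
  set C : ℝ := K ^ 2 / (1/2 - H) ^ 2 / (2 * H) + 1 with hCdef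
  have hC0 : 0 < C := by positivity
  refine ⟨C, hC0, ?_⟩
  intro T hT
  have hT0 : (0 : ℝ) < T := by linarith
  -- abbreviations
  set r : ℝ := -H - 1/2 with hrdef
  have hr1 : (-1 : ℝ) < r := by rw [hrdef]; linarith
  -- translation bound: for 0 ≤ b, ∫ s₁ in 0..b, |c (s₁ - s)| ≤ K
  have htrans : ∀ (b s : ℝ), 0 ≤ b → (∫ s₁ in (0:ℝ)..b, |c (s₁ - s)|) ≤ K := by
    intro b s hb
    rw [intervalIntegral.integral_of_le hb]
    calc ∫ s₁ in Set.Ioc (0:ℝ) b, |c (s₁ - s)|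
        ≤ ∫ s₁, |c (s₁ - s)| := by
          refine setIntegral_le_integral (hcabs.comp_sub_right s) ?_
          exact Filter.Eventually.of_forall fun x => abs_nonneg _
      _ = K := integral_sub_right_eq_self (fun x => |c x|) s
  -- key inner bound
  have hinner : ∀ t₁ ∈ Set.Ioc (1:ℝ) T, ∀ t₂ ∈ Set.Ioc (0:ℝ) (t₁ - 1),
      (∫ s₂ in (0:ℝ)..t₂, ∫ s₁ in (0:ℝ)..t₂,
        (t₁ - s₁) ^ r * (t₂ - s₂) ^ r * |c (s₁ - s₂)|)
      ≤ (t₁ - t₂) ^ r * (K * (T ^ (1/2 - H) / (1/2 - H))) := by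
    intro t₁ ht₁ t₂ ht₂
    obtain ⟨ht₂0, ht₂1⟩ := ht₂
    have ht₁t₂ : (1 : ℝ) ≤ t₁ - t₂ := by linarith
    have ht₁t₂0 : (0 : ℝ) < t₁ - t₂ := by linarith
    have ht₂T : t₂ ≤ T := by
      have := ht₁.2; linarith
    have step1 : ∀ s₂ ∈ Set.Ioc (0:ℝ) t₂,
        (∫ s₁ in (0:ℝ)..t₂, (t₁ - s₁) ^ r * (t₂ - s₂) ^ r * |c (s₁ - s₂)|)
        ≤ (t₁ - t₂) ^ r * (t₂ - s₂) ^ r * K := by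
      intro s₂ hs₂
      have hs₂t₂ : (0:ℝ) ≤ t₂ - s₂ := by linarith [hs₂.2]
      have hb : (∫ s₁ in (0:ℝ)..t₂, (t₁ - s₁) ^ r * (t₂ - s₂) ^ r * |c (s₁ - s₂)|)
          ≤ ∫ s₁ in (0:ℝ)..t₂, (t₁ - t₂) ^ r * (t₂ - s₂) ^ r * |c (s₁ - s₂)| := by
        refine my_interval_mono ht₂0.le ?_ ?_ ?_
        · intro s₁ hs₁
          have h1 : (0:ℝ) ≤ t₁ - s₁ := by linarith [hs₁.2]
          positivity
        · intro s₁ hs₁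
          have h1 : (0:ℝ) < t₁ - t₂ := ht₁t₂0
          have h2 : t₁ - t₂ ≤ t₁ - s₁ := by linarith [hs₁.2]
          have h3 : (t₁ - s₁) ^ r ≤ (t₁ - t₂) ^ r :=
            Real.rpow_le_rpow_of_nonpos h1 h2 (by rw [hrdef]; linarith)
          have h4 : (0:ℝ) ≤ (t₂ - s₂) ^ r * |c (s₁ - s₂)| := by positivity
          calc (t₁ - s₁) ^ r * (t₂ - s₂) ^ r * |c (s₁ - s₂)|
              = (t₁ - s₁) ^ r * ((t₂ - s₂) ^ r * |c (s₁ - s₂)|) := by ring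
            _ ≤ (t₁ - t₂) ^ r * ((t₂ - s₂) ^ r * |c (s₁ - s₂)|) :=
                mul_le_mul_of_nonneg_right h3 h4
            _ = (t₁ - t₂) ^ r * (t₂ - s₂) ^ r * |c (s₁ - s₂)| := by ring
        · have : IntervalIntegrable (fun s₁ => |c (s₁ - s₂)|) volume 0 t₂ := by
            rw [intervalIntegrable_iff]
            exact (hcabs.comp_sub_right s₂).integrableOn
          simpa [mul_assoc] using this.const_mul ((t₁ - t₂) ^ r * (t₂ - s₂) ^ r)
      calc (∫ s₁ in (0:ℝ)..t₂, (t₁ - s₁) ^ r * (t₂ - s₂) ^ r * |c (s₁ - s₂)|)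
          ≤ ∫ s₁ in (0:ℝ)..t₂, (t₁ - t₂) ^ r * (t₂ - s₂) ^ r * |c (s₁ - s₂)| := hb
        _ = (t₁ - t₂) ^ r * (t₂ - s₂) ^ r * ∫ s₁ in (0:ℝ)..t₂, |c (s₁ - s₂)| := by
            rw [← intervalIntegral.integral_const_mul]
        _ ≤ (t₁ - t₂) ^ r * (t₂ - s₂) ^ r * K := by
            refine mul_le_mul_of_nonneg_left (htrans t₂ s₂ ht₂0.le) ?_
            positivity
    -- integrate step1 over s₂
    have hgint : IntervalIntegrable (fun s₂ => (t₁ - t₂) ^ r * (t₂ - s₂) ^ r * K)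
        volume 0 t₂ := by
      have h0 : IntervalIntegrable (fun u : ℝ => u ^ r) volume (t₂ - 0) (t₂ - t₂) :=
        intervalIntegral.intervalIntegrable_rpow' hr1
      have h1 : IntervalIntegrable (fun s₂ : ℝ => (t₂ - s₂) ^ r) volume 0 t₂ := by
        simpa using h0.comp_sub_left t₂
      simpa [mul_assoc, mul_comm, mul_left_comm] using
        (h1.const_mul ((t₁ - t₂) ^ r)).mul_const K
    have hstep2 : (∫ s₂ in (0:ℝ)..t₂, ∫ s₁ in (0:ℝ)..t₂,
          (t₁ - s₁) ^ r * (t₂ - s₂) ^ r * |c (s₁ - s₂)|)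
        ≤ ∫ s₂ in (0:ℝ)..t₂, (t₁ - t₂) ^ r * (t₂ - s₂) ^ r * K := by
      refine my_interval_mono ht₂0.le ?_ step1 hgint
      intro s₂ hs₂
      refine intervalIntegral.integral_nonneg ht₂0.le ?_
      intro s₁ hs₁
      have h1 : (0:ℝ) ≤ t₁ - s₁ := by linarith [hs₁.2, ht₁.1]
      have h2 : (0:ℝ) ≤ t₂ - s₂ := by linarith [hs₂.2]
      positivity
    have hcomp : (∫ s₂ in (0:ℝ)..t₂, (t₂ - s₂) ^ r) = t₂ ^ (r + 1) / (r + 1) := by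
      rw [intervalIntegral.integral_comp_sub_left (fun u => u ^ r) t₂]
      simp only [sub_self, sub_zero]
      rw [integral_rpow (Or.inl hr1)]
      rw [Real.zero_rpow (by linarith : r + 1 ≠ 0)]
      ring
    have hr1eq : r + 1 = 1/2 - H := by rw [hrdef]; ring
    have hval : (∫ s₂ in (0:ℝ)..t₂, (t₁ - t₂) ^ r * (t₂ - s₂) ^ r * K)
        = (t₁ - t₂) ^ r * K * (t₂ ^ (1/2 - H) / (1/2 - H)) := by
      have : (∫ s₂ in (0:ℝ)..t₂, (t₁ - t₂) ^ r * (t₂ - s₂) ^ r * K)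
          = (t₁ - t₂) ^ r * K * ∫ s₂ in (0:ℝ)..t₂, (t₂ - s₂) ^ r := by
        rw [← intervalIntegral.integral_const_mul]
        congr 1; funext s₂; ring
      rw [this, hcomp, hr1eq]
    have hpowle : t₂ ^ (1/2 - H) ≤ T ^ (1/2 - H) :=
      Real.rpow_le_rpow ht₂0.le ht₂T hhalf.le
    calc (∫ s₂ in (0:ℝ)..t₂, ∫ s₁ in (0:ℝ)..t₂,
          (t₁ - s₁) ^ r * (t₂ - s₂) ^ r * |c (s₁ - s₂)|)
        ≤ (t₁ - t₂) ^ r * K * (t₂ ^ (1/2 - H) / (1/2 - H)) := by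
          rw [← hval]; exact hstep2
      _ ≤ (t₁ - t₂) ^ r * K * (T ^ (1/2 - H) / (1/2 - H)) := by
          refine mul_le_mul_of_nonneg_left ?_ (by positivity)
          exact div_le_div_of_nonneg_right hpowle hhalf.le
      _ = (t₁ - t₂) ^ r * (K * (T ^ (1/2 - H) / (1/2 - H))) := by ring
  -- set B := K * T^{1/2-H}/(1/2-H)
  set B : ℝ := K * (T ^ (1/2 - H) / (1/2 - H)) with hBdef
  have hB0 : 0 ≤ B := by positivity
  -- nonnegativity of the inner double integral
  have hinnerpos : ∀ t₁ ∈ Set.Ioc (1:ℝ) T, ∀ t₂ ∈ Set.Ioc (0:ℝ) (t₁ - 1),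
      0 ≤ (∫ s₂ in (0:ℝ)..t₂, ∫ s₁ in (0:ℝ)..t₂,
        (t₁ - s₁) ^ r * (t₂ - s₂) ^ r * |c (s₁ - s₂)|) := by
    intro t₁ ht₁ t₂ ht₂
    refine intervalIntegral.integral_nonneg ht₂.1.le ?_
    intro s₂ hs₂
    refine intervalIntegral.integral_nonneg ht₂.1.le ?_
    intro s₁ hs₁
    have h1 : (0:ℝ) ≤ t₁ - s₁ := by linarith [hs₁.2, ht₁.1, ht₂.2]
    have h2 : (0:ℝ) ≤ t₂ - s₂ := by linarith [hs₂.2]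
    positivity
  -- step B : bound the t₂ integral
  have hstepB : ∀ t₁ ∈ Set.Ioc (1:ℝ) T,
      (∫ t₂ in (0:ℝ)..(t₁ - 1),
        (∫ s₂ in (0:ℝ)..t₂, ∫ s₁ in (0:ℝ)..t₂,
          (t₁ - s₁) ^ r * (t₂ - s₂) ^ r * |c (s₁ - s₂)|) ^ 2)
      ≤ B ^ 2 / (2 * H) := by
    intro t₁ ht₁
    have ht₁1 : (1:ℝ) ≤ t₁ := ht₁.1.le
    have h10 : (0:ℝ) ≤ t₁ - 1 := by linarith
    -- pointwise bound of the square
    have hsq : ∀ t₂ ∈ Set.Ioc (0:ℝ) (t₁ - 1),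
        (∫ s₂ in (0:ℝ)..t₂, ∫ s₁ in (0:ℝ)..t₂,
          (t₁ - s₁) ^ r * (t₂ - s₂) ^ r * |c (s₁ - s₂)|) ^ 2
        ≤ (t₁ - t₂) ^ (2 * r) * B ^ 2 := by
      intro t₂ ht₂
      have ht₁t₂0 : (0:ℝ) < t₁ - t₂ := by linarith [ht₂.2]
      have h1 : ((t₁ - t₂) ^ r * B) ^ 2 = (t₁ - t₂) ^ (2 * r) * B ^ 2 := by
        rw [mul_pow, ← Real.rpow_natCast ((t₁ - t₂) ^ r) 2, ← Real.rpow_mul ht₁t₂0.le]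
        norm_num [mul_comm]
      rw [← h1]
      have := hinner t₁ ht₁ t₂ ht₂
      have h0 := hinnerpos t₁ ht₁ t₂ ht₂
      exact pow_le_pow_left₀ h0 this 2
    -- integrability of the dominating function
    have hcont : IntervalIntegrable (fun t₂ => (t₁ - t₂) ^ (2 * r) * B ^ 2)
        volume 0 (t₁ - 1) := by
      refine (ContinuousOn.intervalIntegrable ?_)
      refine ContinuousOn.mul (ContinuousOn.rpow_const ?_ ?_) continuousOn_const
      · exact (continuous_const.sub continuous_id).continuousOn
      · intro x hx
        rw [Set.uIcc_of_le h10] at hx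
        left
        have := hx.2
        intro habs
        have : t₁ - x = 0 := habs
        linarith [hx.2]
    have hmono := my_interval_mono h10
      (fun t₂ ht₂ => sq_nonneg _)
      hsq hcont
    -- compute the integral of (t₁ - t₂)^{2r}
    have h2r : 2 * r + 1 = -(2 * H) := by rw [hrdef]; ring
    have hcompute : (∫ t₂ in (0:ℝ)..(t₁ - 1), (t₁ - t₂) ^ (2 * r))
        = (1 - t₁ ^ (-(2 * H))) / (2 * H) := by
      rw [intervalIntegral.integral_comp_sub_left (fun u => u ^ (2 * r)) t₁]
      have e1 : t₁ - (t₁ - 1) = 1 := by ring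
      have e2 : t₁ - 0 = t₁ := by ring
      rw [e1, e2]
      have hne : 2 * r ≠ -1 := by rw [hrdef]; intro h; nlinarith
      rw [integral_rpow (Or.inr ⟨hne, ?_⟩)]
      · rw [h2r, Real.one_rpow]
        field_simp
        ring
      · rw [Set.uIcc_of_le ht₁1]
        intro h0mem
        exact absurd h0mem.1 (by norm_num)
    have hintle : (∫ t₂ in (0:ℝ)..(t₁ - 1), (t₁ - t₂) ^ (2 * r) * B ^ 2)
        ≤ B ^ 2 / (2 * H) := by
      rw [intervalIntegral.integral_mul_const, hcompute]
      have h1 : (1 - t₁ ^ (-(2 * H))) / (2 * H) ≤ 1 / (2 * H) := by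
        refine div_le_div_of_nonneg_right ?_ (by linarith)
        have : (0:ℝ) ≤ t₁ ^ (-(2 * H)) := Real.rpow_nonneg (by linarith) _
        linarith
      calc (1 - t₁ ^ (-(2 * H))) / (2 * H) * B ^ 2
          ≤ 1 / (2 * H) * B ^ 2 :=
            mul_le_mul_of_nonneg_right h1 (sq_nonneg B)
        _ = B ^ 2 / (2 * H) := by ring
    linarith
  -- step C : integrate over t₁
  have hJnonneg : ∀ t₁ ∈ Set.Ioc (1:ℝ) T,
      0 ≤ (∫ t₂ in (0:ℝ)..(t₁ - 1),
        (∫ s₂ in (0:ℝ)..t₂, ∫ s₁ in (0:ℝ)..t₂,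
          (t₁ - s₁) ^ r * (t₂ - s₂) ^ r * |c (s₁ - s₂)|) ^ 2) := by
    intro t₁ ht₁
    refine intervalIntegral.integral_nonneg (by linarith [ht₁.1]) ?_
    intro t₂ _
    exact sq_nonneg _
  have hstepC : (∫ t₁ in (1:ℝ)..T, ∫ t₂ in (0:ℝ)..(t₁ - 1),
        (∫ s₂ in (0:ℝ)..t₂, ∫ s₁ in (0:ℝ)..t₂,
          (t₁ - s₁) ^ r * (t₂ - s₂) ^ r * |c (s₁ - s₂)|) ^ 2)
      ≤ (T - 1) * (B ^ 2 / (2 * H)) := by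
    have := my_interval_mono hT hJnonneg hstepB intervalIntegrable_const
    rwa [intervalIntegral.integral_const, smul_eq_mul] at this
  -- final arithmetic
  have hBval : B ^ 2 / (2 * H) = K ^ 2 / (1/2 - H) ^ 2 / (2 * H) * T ^ (1 - 2 * H) := by
    rw [hBdef]
    have hTsq : (T ^ (1/2 - H)) ^ 2 = T ^ (1 - 2 * H) := by
      rw [← Real.rpow_natCast (T ^ (1/2 - H)) 2, ← Real.rpow_mul hT0.le]
      norm_num
      ring_nf
    rw [mul_pow, div_pow, hTsq]
    ring
  have hfinal : (T - 1) * (B ^ 2 / (2 * H)) ≤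
      (K ^ 2 / (1/2 - H) ^ 2 / (2 * H)) * T ^ 2 * T ^ (-2 * H) := by
    rw [hBval]
    have h1 : T ^ (1 - 2 * H) * T = T ^ 2 * T ^ (-2 * H) := by
      rw [← Real.rpow_natCast T 2, ← Real.rpow_add hT0, ← Real.rpow_add_one hT0.ne']
      norm_num
      ring_nf
    calc (T - 1) * (K ^ 2 / (1/2 - H) ^ 2 / (2 * H) * T ^ (1 - 2 * H))
        ≤ T * (K ^ 2 / (1/2 - H) ^ 2 / (2 * H) * T ^ (1 - 2 * H)) := by
          refine mul_le_mul_of_nonneg_right (by linarith) ?_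
          positivity
      _ = (K ^ 2 / (1/2 - H) ^ 2 / (2 * H)) * (T ^ (1 - 2 * H) * T) := by ring
      _ = (K ^ 2 / (1/2 - H) ^ 2 / (2 * H)) * T ^ 2 * T ^ (-2 * H) := by
          rw [h1]; ring
  have hmain : (1 / T ^ 2) * ∫ t₁ in (1 : ℝ)..T, ∫ t₂ in (0 : ℝ)..(t₁ - 1),
          (∫ s₂ in (0 : ℝ)..t₂, ∫ s₁ in (0 : ℝ)..t₂,
            (t₁ - s₁) ^ r * (t₂ - s₂) ^ r * |c (s₁ - s₂)|) ^ 2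
      ≤ (1 / T ^ 2) * ((K ^ 2 / (1/2 - H) ^ 2 / (2 * H)) * T ^ 2 * T ^ (-2 * H)) := by
    refine mul_le_mul_of_nonneg_left (le_trans hstepC hfinal) (by positivity)
  have heq : (1 / T ^ 2) * ((K ^ 2 / (1/2 - H) ^ 2 / (2 * H)) * T ^ 2 * T ^ (-2 * H))
      = (K ^ 2 / (1/2 - H) ^ 2 / (2 * H)) * T ^ (-2 * H) := by
    have hT2 : (T : ℝ) ^ 2 ≠ 0 := by positivity
    have key : ∀ a x : ℝ, (1 / T ^ 2) * (a * T ^ 2 * x) = a * x := by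
      intro a x
      field_simp
    exact key _ _
  have hCle : (K ^ 2 / (1/2 - H) ^ 2 / (2 * H)) * T ^ (-2 * H) ≤ C * T ^ (-2 * H) := by
    refine mul_le_mul_of_nonneg_right ?_ (Real.rpow_nonneg hT0.le _)
    rw [hCdef]; linarith
  calc (1 / T ^ 2) * ∫ t₁ in (1 : ℝ)..T, ∫ t₂ in (0 : ℝ)..(t₁ - 1),
          (∫ s₂ in (0 : ℝ)..t₂, ∫ s₁ in (0 : ℝ)..t₂,
            (t₁ - s₁) ^ (-H - 1/2) * (t₂ - s₂) ^ (-H - 1/2) * |c (s₁ - s₂)|) ^ 2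
      = (1 / T ^ 2) * ∫ t₁ in (1 : ℝ)..T, ∫ t₂ in (0 : ℝ)..(t₁ - 1),
          (∫ s₂ in (0 : ℝ)..t₂, ∫ s₁ in (0 : ℝ)..t₂,
            (t₁ - s₁) ^ r * (t₂ - s₂) ^ r * |c (s₁ - s₂)|) ^ 2 := by rw [hrdef]
    _ ≤ (1 / T ^ 2) * ((K ^ 2 / (1/2 - H) ^ 2 / (2 * H)) * T ^ 2 * T ^ (-2 * H)) := hmain
    _ = (K ^ 2 / (1/2 - H) ^ 2 / (2 * H)) * T ^ (-2 * H) := heq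
    _ ≤ C * T ^ (-2 * H) := hCle
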